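/- First-order condition for a symmetric interior equilibrium (Proposition 3.5, FOC): Let t₀ ∈ ℝ and let B, V, θ : ℝ → ℝ be twice continuously differentiable on a neighborhood of t₀ with B > 0 and V > 0 on that neighborhood and θ(t₀) = 0. Define ρ(t) = √(B(t)·B(t₀))·cos(θ(t)), w(t) = (V(t₀) + B(t₀) − ρ(t)) / (V(t) + B(t) + V(t₀) + B(t₀) − 2ρ(t)), and Π(t) = (V(t₀) + B(t₀)) − (1 − w(t))²·(V(t₀) + B(t₀)) − w(t)²·(V(t) + B(t)) − 2·w(t)·(1 − w(t))·ρ(t) − c, where c ∈ ℝ. If t₀ is a local maximum of Π, then V′(t₀) + 2·B′(t₀) = 0. -/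

import Mathlib

/-- **First-order condition for a symmetric interior equilibrium** (Proposition 3.5, FOC):
with `B, V, θ` twice continuously differentiable on a neighborhood of `t₀`, positive
`B, V` on that neighborhood and `θ t₀ = 0`, define `ρ t = √(B t · B t₀) · cos (θ t)`,
the optimal weight `w t = (V t₀ + B t₀ − ρ t)/(V t + B t + V t₀ + B t₀ − 2 ρ t)`, and
firm 1's profit
`Π t = (V t₀ + B t₀) − (1 − w t)²(V t₀ + B t₀) − (w t)²(V t + B t) − 2 w t (1 − w t) ρ t − c`.
If `t₀` is a local maximum of `Π`, then `V′(t₀) + 2 B′(t₀) = 0`. -/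
theorem symmetric_equilibrium_foc
    (t₀ c : ℝ) (B V θ : ℝ → ℝ) (s : Set ℝ) (hs : s ∈ nhds t₀)
    (hB : ContDiffOn ℝ 2 B s) (hV : ContDiffOn ℝ 2 V s) (hθ : ContDiffOn ℝ 2 θ s)
    (hBpos : ∀ t ∈ s, 0 < B t) (hVpos : ∀ t ∈ s, 0 < V t)
    (hθ₀ : θ t₀ = 0)
    (ρ w profit : ℝ → ℝ)
    (hρ : ∀ t, ρ t = Real.sqrt (B t * B t₀) * Real.cos (θ t))
    (hw : ∀ t, w t = (V t₀ + B t₀ - ρ t) / (V t + B t + V t₀ + B t₀ - 2 * ρ t))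
    (hprofit : ∀ t, profit t
      = (V t₀ + B t₀) - (1 - w t) ^ 2 * (V t₀ + B t₀) - (w t) ^ 2 * (V t + B t)
        - 2 * w t * (1 - w t) * ρ t - c)
    (hmax : IsLocalMax profit t₀) :
    deriv V t₀ + 2 * deriv B t₀ = 0 := by
  have ht₀s : t₀ ∈ s := mem_of_mem_nhds hs
  have hb0 : 0 < B t₀ := hBpos t₀ ht₀s
  have hv0 : 0 < V t₀ := hVpos t₀ ht₀s
  set b' := deriv B t₀ with hb'
  set v' := deriv V t₀ with hv'
  -- differentiability
  have hBd : HasDerivAt B b' t₀ := by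
    have := (hB.contDiffAt hs).differentiableAt (by norm_num)
    exact this.hasDerivAt
  have hVd : HasDerivAt V v' t₀ := by
    have := (hV.contDiffAt hs).differentiableAt (by norm_num)
    exact this.hasDerivAt
  have hθd : HasDerivAt θ (deriv θ t₀) t₀ := by
    have := (hθ.contDiffAt hs).differentiableAt (by norm_num)
    exact this.hasDerivAt
  have hsql : Real.sqrt (B t₀ * B t₀) = B t₀ := Real.sqrt_mul_self hb0.le
  -- derivative of ρ
  have hρd : HasDerivAt ρ (b' / 2) t₀ := by
    have hbb : HasDerivAt (fun t => B t * B t₀) (b' * B t₀) t₀ := hBd.mul_const _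
    have hsq : HasDerivAt (fun t => Real.sqrt (B t * B t₀)) (b' / 2) t₀ := by
      have h := hbb.sqrt (by positivity)
      convert h using 1
      rw [hsql]; field_simp
    have hcos : HasDerivAt (fun t => Real.cos (θ t)) 0 t₀ := by
      have h := hθd.cos
      rw [hθ₀, Real.sin_zero] at h
      simpa using h
    have h := hsq.mul hcos
    have hfe : ρ = fun t => Real.sqrt (B t * B t₀) * Real.cos (θ t) := funext hρ
    rw [hfe]
    exact h.congr_deriv (by rw [hθ₀, Real.cos_zero]; ring)
  have hρ0 : ρ t₀ = B t₀ := by rw [hρ, hθ₀, Real.cos_zero, hsql]; ring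
  -- derivative of w
  have hN : HasDerivAt (fun t => V t₀ + B t₀ - ρ t) (0 - b' / 2) t₀ :=
    (hasDerivAt_const t₀ (V t₀ + B t₀)).sub hρd
  have hD : HasDerivAt (fun t => V t + B t + V t₀ + B t₀ - 2 * ρ t)
      (v' + b' + 0 + 0 - 2 * (b' / 2)) t₀ :=
    ((((hVd.add hBd).add (hasDerivAt_const t₀ (V t₀))).add
      (hasDerivAt_const t₀ (B t₀))).sub (hρd.const_mul 2))
  have hD0 : V t₀ + B t₀ + V t₀ + B t₀ - 2 * ρ t₀ = 2 * V t₀ := by rw [hρ0]; ring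
  have hD0ne : V t₀ + B t₀ + V t₀ + B t₀ - 2 * ρ t₀ ≠ 0 := by
    rw [hD0]; positivity
  have hwd : HasDerivAt w
      (((0 - b' / 2) * (V t₀ + B t₀ + V t₀ + B t₀ - 2 * ρ t₀)
        - (V t₀ + B t₀ - ρ t₀) * (v' + b' + 0 + 0 - 2 * (b' / 2)))
        / (V t₀ + B t₀ + V t₀ + B t₀ - 2 * ρ t₀) ^ 2) t₀ := by
    have hfe : w = fun t => (V t₀ + B t₀ - ρ t) / (V t + B t + V t₀ + B t₀ - 2 * ρ t) :=
      funext hw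
    rw [hfe]
    exact hN.div hD hD0ne
  set w' := ((0 - b' / 2) * (V t₀ + B t₀ + V t₀ + B t₀ - 2 * ρ t₀)
        - (V t₀ + B t₀ - ρ t₀) * (v' + b' + 0 + 0 - 2 * (b' / 2)))
        / (V t₀ + B t₀ + V t₀ + B t₀ - 2 * ρ t₀) ^ 2 with hw'def
  have hw0 : w t₀ = 1 / 2 := by
    rw [hw, hρ0]
    rw [show V t₀ + B t₀ + V t₀ + B t₀ - 2 * B t₀ = 2 * V t₀ by ring]
    rw [show V t₀ + B t₀ - B t₀ = V t₀ by ring]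
    field_simp
  -- derivative of profit
  have h1w : HasDerivAt (fun t => 1 - w t) (0 - w') t₀ := (hasDerivAt_const t₀ 1).sub hwd
  have h2 : HasDerivAt (fun t => (1 - w t) ^ 2 * (V t₀ + B t₀))
      ((2 * (1 - w t₀) ^ 1 * (0 - w')) * (V t₀ + B t₀)) t₀ :=
    (h1w.pow 2).mul_const _
  have h3 : HasDerivAt (fun t => (w t) ^ 2 * (V t + B t))
      ((2 * (w t₀) ^ 1 * w') * (V t₀ + B t₀) + (w t₀) ^ 2 * (v' + b')) t₀ :=
    (hwd.pow 2).mul (hVd.add hBd)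
  have h4 : HasDerivAt (fun t => 2 * w t * (1 - w t) * ρ t)
      ((2 * w' * (1 - w t₀) + 2 * w t₀ * (0 - w')) * ρ t₀
        + 2 * w t₀ * (1 - w t₀) * (b' / 2)) t₀ :=
    (((hwd.const_mul 2).mul h1w).mul hρd)
  have hPd : HasDerivAt profit
      (0 - (2 * (1 - w t₀) ^ 1 * (0 - w')) * (V t₀ + B t₀)
        - ((2 * (w t₀) ^ 1 * w') * (V t₀ + B t₀) + (w t₀) ^ 2 * (v' + b'))
        - ((2 * w' * (1 - w t₀) + 2 * w t₀ * (0 - w')) * ρ t₀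
            + 2 * w t₀ * (1 - w t₀) * (b' / 2))
        - 0) t₀ := by
    have hfe : profit = fun t => (V t₀ + B t₀) - (1 - w t) ^ 2 * (V t₀ + B t₀)
        - (w t) ^ 2 * (V t + B t) - 2 * w t * (1 - w t) * ρ t - c := funext hprofit
    rw [hfe]
    exact ((((hasDerivAt_const t₀ (V t₀ + B t₀)).sub h2).sub h3).sub h4).sub
      (hasDerivAt_const t₀ c)
  have hderiv0 : deriv profit t₀ = 0 := hmax.deriv_eq_zero
  rw [hPd.deriv] at hderiv0
  rw [hw0, hρ0] at hderiv0
  ring_nf at hderiv0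
  -- hderiv0 should now be linear in v', b'
  nlinarith [hderiv0]
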